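/- In the polynomial ring Z[x,y,z,w], every homogeneous polynomial of degree 4 lies in the ideal generated by x^2, y^2, z^2, w^2 and xy; equivalently, the degree-4 homogeneous component of the quotient Z[x,y,z,w]/(x^2, y^2, z^2, w^2, xy) is zero. -/

import Mathlib

open MvPolynomial

/-- In `ℤ[x,y,z,w]`, every homogeneous polynomial of degree 4 lies in the ideal
generated by `x^2, y^2, z^2, w^2` and `x*y`. -/
theorem degree_four_mem_ideal_int
    (f : MvPolynomial (Fin 4) ℤ) (hf : f.IsHomogeneous 4) :
    f ∈ Ideal.span ({X 0 ^ 2, X 1 ^ 2, X 2 ^ 2, X 3 ^ 2, X 0 * X 1} :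
      Set (MvPolynomial (Fin 4) ℤ)) := by
  set I := Ideal.span ({X 0 ^ 2, X 1 ^ 2, X 2 ^ 2, X 3 ^ 2, X 0 * X 1} :
      Set (MvPolynomial (Fin 4) ℤ)) with hI
  have key : ∀ d : Fin 4 →₀ ℕ, d 0 + d 1 + d 2 + d 3 = 4 → ∀ c : ℤ,
      (monomial d c : MvPolynomial (Fin 4) ℤ) ∈ I := by
    intro d hd c
    have hsq : ∀ i : Fin 4, 2 ≤ d i → (X i ^ 2 : MvPolynomial (Fin 4) ℤ) ∈ I →
        (monomial d c : MvPolynomial (Fin 4) ℤ) ∈ I := by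
      intro i hi hmem
      have hle : Finsupp.single i 2 ≤ d := by rwa [Finsupp.single_le_iff]
      have : (monomial d c : MvPolynomial (Fin 4) ℤ) =
          monomial (d - Finsupp.single i 2) c * X i ^ 2 := by
        rw [X_pow_eq_monomial, monomial_mul, mul_one, tsub_add_cancel_of_le hle]
      rw [this]
      exact Ideal.mul_mem_left _ _ hmem
    by_cases h0 : 2 ≤ d 0
    · exact hsq 0 h0 (Ideal.subset_span (Set.mem_insert _ _))
    by_cases h1 : 2 ≤ d 1
    · exact hsq 1 h1 (Ideal.subset_span (Set.mem_insert_of_mem _ (Set.mem_insert _ _)))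
    by_cases h2 : 2 ≤ d 2
    · exact hsq 2 h2 (Ideal.subset_span (Set.mem_insert_of_mem _ (Set.mem_insert_of_mem _ (Set.mem_insert _ _))))
    by_cases h3 : 2 ≤ d 3
    · exact hsq 3 h3 (Ideal.subset_span (Set.mem_insert_of_mem _ (Set.mem_insert_of_mem _ (Set.mem_insert_of_mem _ (Set.mem_insert _ _)))))
    · -- all exponents ≤ 1, so all equal 1
      have e0 : 1 ≤ d 0 := by omega
      have e1 : 1 ≤ d 1 := by omega
      have hle : Finsupp.single (0 : Fin 4) 1 + Finsupp.single 1 1 ≤ d := by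
        intro i
        fin_cases i <;> simp [Finsupp.single_apply] <;> omega
      have : (monomial d c : MvPolynomial (Fin 4) ℤ) =
          monomial (d - (Finsupp.single 0 1 + Finsupp.single 1 1)) c * (X 0 * X 1) := by
        rw [X, X, monomial_mul, monomial_mul, mul_one, mul_one,
          tsub_add_cancel_of_le hle]
      rw [this]
      exact Ideal.mul_mem_left _ _ (Ideal.subset_span (Set.mem_insert_of_mem _ (Set.mem_insert_of_mem _ (Set.mem_insert_of_mem _ (Set.mem_insert_of_mem _ rfl)))))
  rw [← f.support_sum_monomial_coeff]
  refine Ideal.sum_mem _ fun d hd => ?_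
  have hd' : coeff d f ≠ 0 := (mem_support_iff).mp hd
  have h := hf hd'
  change (Finsupp.weight (fun _ => 1)) d = 4 at h
  rw [← Finsupp.degree_eq_weight_one, Finsupp.degree_apply,
    Finset.sum_subset (Finset.subset_univ d.support) (by simp), Fin.sum_univ_four] at h
  exact key d h _
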